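/- Let H be the subgroup of B4 generated by σ1, σ3 and (σ3σ2σ3)² (the centralizer of σ3 in B4), and let ρ : B4 → B3 be the homomorphism with ρ(σ1) = ρ(σ3) = τ2 and ρ(σ2) = τ1. Then H ∩ ker ρ is the subgroup generated by b1 and b2 b1 b2⁻¹, and every element of H can be written uniquely in the form u·σ3^m·((σ3σ2σ3)²)^k with u ∈ ⟨b1, b2 b1 b2⁻¹⟩ and m, k ∈ ℤ (so H is the semidirect product ⟨b1, b2 b1 b2⁻¹⟩ ⋊ ⟨σ3, (σ3σ2σ3)²⟩). -/

import Mathlib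

noncomputable section

/-- The braid relations for the braid group `B₄` on three generators
`σ1 = 0`, `σ2 = 1`, `σ3 = 2`. -/
def braidRels3 : Set (FreeGroup (Fin 3)) :=
  { FreeGroup.of 0 * FreeGroup.of 1 * FreeGroup.of 0 *
      (FreeGroup.of 1 * FreeGroup.of 0 * FreeGroup.of 1)⁻¹,
    FreeGroup.of 1 * FreeGroup.of 2 * FreeGroup.of 1 *
      (FreeGroup.of 2 * FreeGroup.of 1 * FreeGroup.of 2)⁻¹,
    FreeGroup.of 0 * FreeGroup.of 2 * (FreeGroup.of 2 * FreeGroup.of 0)⁻¹ }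

/-- The braid group on 4 strands, presented by generators and relations. -/
abbrev B4 : Type := PresentedGroup braidRels3

/-- The standard generators of `B₄`. -/
def σ (i : Fin 3) : B4 := PresentedGroup.of i

/-- The braid relation for the braid group `B₃` on two generators `τ1 = 0`, `τ2 = 1`. -/
def braidRels2 : Set (FreeGroup (Fin 2)) :=
  { FreeGroup.of 0 * FreeGroup.of 1 * FreeGroup.of 0 *
      (FreeGroup.of 1 * FreeGroup.of 0 * FreeGroup.of 1)⁻¹ }

/-- The braid group on 3 strands, presented by generators and relations. -/
abbrev B3 : Type := PresentedGroup braidRels2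

/-- The standard generators of `B₃`. -/
def τ (i : Fin 2) : B3 := PresentedGroup.of i

/-- The braid `b1 = σ1 σ3⁻¹`. -/
def b1 : B4 := σ 0 * (σ 2)⁻¹

/-- The braid `b2 = σ1 σ2 σ3 σ1⁻¹ σ2⁻¹ σ1⁻¹`. -/
def b2 : B4 := σ 0 * σ 1 * σ 2 * (σ 0)⁻¹ * (σ 1)⁻¹ * (σ 0)⁻¹

/-- The centralizer of `σ3` in `B₄`: the subgroup generated by `σ1`, `σ3`
and `(σ3 σ2 σ3)²`. -/
def centralizerσ3 : Subgroup B4 :=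
  Subgroup.closure {σ 0, σ 2, (σ 2 * σ 1 * σ 2) ^ 2}

/-- The subgroup of `B₄` generated by `b1` and `b2 b1 b2⁻¹`. -/
def K : Subgroup B4 := Subgroup.closure {b1, b2 * b1 * b2⁻¹}

/-! ### Auxiliary material: the braid group `B₃` and `SL(2,ℤ)` -/

abbrev SL2 := Matrix.SpecialLinearGroup (Fin 2) ℤ

def MA : SL2 := ⟨!![1,1;0,1], by decide⟩
def MB : SL2 := ⟨!![1,0;-1,1], by decide⟩
def NI : SL2 := ⟨!![-1,0;0,-1], by decide⟩

lemma powMB : ∀ m : ℤ, ((MB ^ m : SL2) : Matrix (Fin 2) (Fin 2) ℤ) = !![1,0;-m,1] := by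
  intro m
  induction m using Int.induction_on with
  | zero => simp [Matrix.one_fin_two]
  | succ n ih =>
               rw [_root_.zpow_add_one, Matrix.SpecialLinearGroup.coe_mul, ih]
               show _ = !![(1:ℤ),0;-((n:ℤ)+1),1]
               simp [MB, Matrix.mul_fin_two]; ring_nf
  | pred n ih =>
               rw [_root_.zpow_sub_one, Matrix.SpecialLinearGroup.coe_mul, ih]
               have h2 : ((MB⁻¹ : SL2) : Matrix (Fin 2) (Fin 2) ℤ) = !![1,0;1,1] := by decide
               rw [h2]
               show _ = !![(1:ℤ),0;-(-(n:ℤ)-1),1]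
               simp [Matrix.mul_fin_two]; ring_nf

def ψ : B3 →* SL2 := PresentedGroup.toGroup (f := ![MA, MB])
  (by intro r hr
      simp only [braidRels2, Set.mem_singleton_iff] at hr
      subst hr
      simp only [_root_.map_mul, _root_.map_inv, FreeGroup.lift_apply_of,
        Matrix.cons_val_zero, Matrix.cons_val_one, Matrix.head_cons]
      rw [show (MA * MB * MA : SL2) = MB * MA * MB from Subtype.ext (by decide)]
      group)

lemma ψ0 : ψ (τ 0) = MA := PresentedGroup.toGroup.of _
lemma ψ1 : ψ (τ 1) = MB := PresentedGroup.toGroup.of _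

def e3 : B3 →* Multiplicative ℤ := PresentedGroup.toGroup (f := fun _ => Multiplicative.ofAdd 1)
  (by intro r hr
      simp only [braidRels2, Set.mem_singleton_iff] at hr
      subst hr
      simp only [_root_.map_mul, _root_.map_inv, FreeGroup.lift_apply_of]
      group)
lemma e30 : e3 (τ 0) = Multiplicative.ofAdd 1 := PresentedGroup.toGroup.of _
lemma e31 : e3 (τ 1) = Multiplicative.ofAdd 1 := PresentedGroup.toGroup.of _

lemma sqNI : NI * NI = 1 := Subtype.ext (by decide)

/-- In `B₃`, `τ2^m ((τ2 τ1 τ2)²)^k = 1` forces `m = k = 0`. -/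
lemma B3key (m k : ℤ) (h : (τ 1)^m * ((τ 1 * τ 0 * τ 1)^2)^k = 1) : m = 0 ∧ k = 0 := by
  have he : m + 6*k = 0 := by
    have := congrArg e3 h
    simp only [_root_.map_mul, _root_.map_zpow, _root_.map_pow, e30, e31, _root_.map_one] at this
    have h2 : (Multiplicative.ofAdd (1:ℤ))^m * (((Multiplicative.ofAdd (1:ℤ)) *
        (Multiplicative.ofAdd (1:ℤ)) * (Multiplicative.ofAdd (1:ℤ)))^2)^k = 1 := this
    have h3 := congrArg Multiplicative.toAdd h2
    simp only [toAdd_mul, toAdd_zpow, toAdd_pow, toAdd_ofAdd, toAdd_one, smul_eq_mul,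
      nsmul_eq_mul] at h3
    push_cast at h3
    linarith
  have hm := congrArg ψ h
  simp only [_root_.map_mul, _root_.map_zpow, _root_.map_pow, ψ0, ψ1, _root_.map_one] at hm
  rw [show (MB * MA * MB)^2 = NI from Subtype.ext (by decide)] at hm
  have hm0 : m = 0 := by
    rcases Int.even_or_odd k with ⟨t, ht⟩ | ⟨t, ht⟩
    · subst ht
      rw [show t + t = 2 * t by ring, _root_.zpow_mul,
        show (NI ^ (2:ℤ)) = 1 from by rw [show (2:ℤ) = (2:ℕ) from rfl, zpow_natCast, pow_two, sqNI],
        _root_.one_zpow, mul_one] at hm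
      have := congrArg (fun M : SL2 => (M : Matrix (Fin 2) (Fin 2) ℤ) 1 0) hm
      simp only [powMB] at this
      simpa using this
    · subst ht
      rw [show (2*t + 1 : ℤ) = 1 + 2 * t by ring, _root_.zpow_add, _root_.zpow_mul,
        show (NI ^ (2:ℤ)) = 1 from by rw [show (2:ℤ) = (2:ℕ) from rfl, zpow_natCast, pow_two, sqNI],
        _root_.one_zpow, mul_one, zpow_one] at hm
      have := congrArg (fun M : SL2 => (M : Matrix (Fin 2) (Fin 2) ℤ) 0 0) hm
      exfalso
      simp only [Matrix.SpecialLinearGroup.coe_mul, powMB] at this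
      simp [NI, Matrix.mul_fin_two] at this
  exact ⟨hm0, by linarith⟩

/-! ### Auxiliary material: word computations in `B₄` -/

section B4words

local notation "a" => σ 0
local notation "b" => σ 1
local notation "c" => σ 2

lemma relB4 (r : FreeGroup (Fin 3)) (h : r ∈ braidRels3) : (QuotientGroup.mk r : B4) = 1 :=
  (QuotientGroup.eq_one_iff r).mpr (Subgroup.subset_normalClosure h)

lemma r1 : a * b * a = b * a * b := by
  have := relB4 _ (show _ ∈ braidRels3 from by left; rfl)
  simp only [QuotientGroup.mk_mul, QuotientGroup.mk_inv] at this
  rw [mul_inv_eq_one] at this; exact this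

lemma r2 : b * c * b = c * b * c := by
  have := relB4 _ (show _ ∈ braidRels3 from by right; left; rfl)
  simp only [QuotientGroup.mk_mul, QuotientGroup.mk_inv] at this
  rw [mul_inv_eq_one] at this; exact this

lemma r3 : a * c = c * a := by
  have := relB4 _ (show _ ∈ braidRels3 from by right; right; rfl)
  simp only [QuotientGroup.mk_mul, QuotientGroup.mk_inv] at this
  rw [mul_inv_eq_one] at this; exact this

/-- The half twist `Δ₄ = σ1 σ2 σ1 σ3 σ2 σ1`. -/
def dd4 : B4 := a * b * a * c * b * a
/-- `Δ' = (σ1 σ2 σ1)²`. -/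
def dp : B4 := a * b * a * (a * b * a)
/-- `Δ = (σ3 σ2 σ3)²`. -/
def dd : B4 := (c * b * c) ^ 2

lemma dd_ex : dd = c * b * c * (c * b * c) := by rw [dd, pow_two]

lemma L1 : dd4 * a = c * dd4 := by
  rw [dd4]
  calc a*b*a*c*b*a*a = a * (b * (a*c) * (b*(a*a))) := by group
    _ = a * (b * (c*a) * (b*(a*a))) := by rw [r3]
    _ = a * (b*c) * ((a*b*a) * a) := by group
    _ = a * (b*c) * ((b*a*b) * a) := by rw [r1]
    _ = a * (b*c*b) * (a*(b*a)) := by group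
    _ = a * (c*b*c) * (a*(b*a)) := by rw [r2]
    _ = (a*c) * (b*((c*a)*(b*a))) := by group
    _ = (a*c) * (b*((a*c)*(b*a))) := by rw [← r3]
    _ = (a*c) * (b*(a*(c*(b*a)))) := by group
    _ = (c*a) * (b*(a*(c*(b*a)))) := by rw [r3]
    _ = c * (a*b*a*c*b*a) := by group

lemma L2 : dd4 * b = b * dd4 := by
  rw [dd4]
  calc a*b*a*c*b*a*b = a*b*a*c*(b*a*b) := by group
    _ = a*b*a*c*(a*b*a) := by rw [← r1]
    _ = a*b*a*(c*a)*(b*a) := by group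
    _ = a*b*a*(a*c)*(b*a) := by rw [← r3]
    _ = (a*b*a)*(a*(c*(b*a))) := by group
    _ = (b*a*b)*(a*(c*(b*a))) := by rw [r1]
    _ = b * (a*b*a*c*b*a) := by group

lemma L3 : dd4 * c = a * dd4 := by
  rw [dd4]
  calc a*b*a*c*b*a*c = a*b*a*c*b*(a*c) := by group
    _ = a*b*a*c*b*(c*a) := by rw [r3]
    _ = a*b*a*((c*b*c)*a) := by group
    _ = a*b*a*((b*c*b)*a) := by rw [← r2]
    _ = a*(b*a*b)*(c*(b*a)) := by group
    _ = a*(a*b*a)*(c*(b*a)) := by rw [← r1]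
    _ = a * (a*b*a*c*b*a) := by group

lemma M1 : dd4 * dp = dd * dd4 := by
  rw [dp, dd_ex]
  calc dd4 * (a*b*a*(a*b*a)) = (dd4*a)*(b*(a*(a*(b*a)))) := by group
    _ = (c*dd4)*(b*(a*(a*(b*a)))) := by rw [L1]
    _ = c*((dd4*b)*(a*(a*(b*a)))) := by group
    _ = c*((b*dd4)*(a*(a*(b*a)))) := by rw [L2]
    _ = c*(b*((dd4*a)*(a*(b*a)))) := by group
    _ = c*(b*((c*dd4)*(a*(b*a)))) := by rw [L1]
    _ = c*(b*(c*((dd4*a)*(b*a)))) := by group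
    _ = c*(b*(c*((c*dd4)*(b*a)))) := by rw [L1]
    _ = c*(b*(c*(c*((dd4*b)*a)))) := by group
    _ = c*(b*(c*(c*((b*dd4)*a)))) := by rw [L2]
    _ = c*(b*(c*(c*(b*(dd4*a))))) := by group
    _ = c*(b*(c*(c*(b*(c*dd4))))) := by rw [L1]
    _ = c*b*c*(c*b*c) * dd4 := by group

lemma N1 : dd4 * dd4 = c*b*c*(a*b*c) * dd4 := by
  nth_rewrite 2 [dd4]
  calc dd4 * (a*b*a*c*b*a) = (dd4*a)*(b*(a*(c*(b*a)))) := by group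
    _ = (c*dd4)*(b*(a*(c*(b*a)))) := by rw [L1]
    _ = c*((dd4*b)*(a*(c*(b*a)))) := by group
    _ = c*((b*dd4)*(a*(c*(b*a)))) := by rw [L2]
    _ = c*(b*((dd4*a)*(c*(b*a)))) := by group
    _ = c*(b*((c*dd4)*(c*(b*a)))) := by rw [L1]
    _ = c*(b*(c*((dd4*c)*(b*a)))) := by group
    _ = c*(b*(c*((a*dd4)*(b*a)))) := by rw [L3]
    _ = c*(b*(c*(a*((dd4*b)*a)))) := by group
    _ = c*(b*(c*(a*((b*dd4)*a)))) := by rw [L2]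
    _ = c*(b*(c*(a*(b*(dd4*a))))) := by group
    _ = c*(b*(c*(a*(b*(c*dd4))))) := by rw [L1]
    _ = c*b*c*(a*b*c) * dd4 := by group

lemma T3 : a*b*c*(a*b*a)*(c*b*a) = c*b*c*(a*b*c)*(c*b*a) := by
  calc a*b*c*(a*b*a)*(c*b*a) = a*b*c*(b*a*b)*(c*b*a) := by rw [r1]
    _ = (a*(b*c*b)*(a*(b*c))) * (b*a) := by group
    _ = (a*(c*b*c)*(a*(b*c))) * (b*a) := by rw [r2]
    _ = ((a*c)*(b*(c*(a*(b*c))))) * (b*a) := by group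
    _ = ((c*a)*(b*(c*(a*(b*c))))) * (b*a) := by rw [r3]
    _ = (c*(a*(b*((c*a)*(b*c))))) * (b*a) := by group
    _ = (c*(a*(b*((a*c)*(b*c))))) * (b*a) := by rw [← r3]
    _ = (c*(a*b*a)*(c*(b*c))) * (b*a) := by group
    _ = (c*(b*a*b)*(c*(b*c))) * (b*a) := by rw [r1]
    _ = (c*(b*(a*(b*c*b)*c))) * (b*a) := by group
    _ = (c*(b*(a*(c*b*c)*c))) * (b*a) := by rw [r2]
    _ = c*b*((a*c)*(b*(c*(c*(b*a))))) := by group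
    _ = c*b*((c*a)*(b*(c*(c*(b*a))))) := by rw [r3]
    _ = c*b*c*(a*b*c)*(c*b*a) := by group

lemma T2 : dd4 * dd4 = dd * (a*b*c*(c*b*a)) := by
  rw [N1]
  nth_rewrite 1 [dd4]
  calc c*b*c*(a*b*c) * (a*b*a*c*b*a) = (c*b*c) * (a*b*c*(a*b*a)*(c*b*a)) := by group
    _ = (c*b*c) * (c*b*c*(a*b*c)*(c*b*a)) := by rw [T3]
    _ = (c*b*c*(c*b*c)) * (a*b*c*(c*b*a)) := by group
    _ = dd * (a*b*c*(c*b*a)) := by rw [← dd_ex]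

lemma W1 : dd = b*c*c*(b*c*c) := by
  rw [dd_ex]
  calc c*b*c*(c*b*c) = (c*b*c)*(c*b*c) := by group
    _ = (b*c*b)*(c*b*c) := by rw [← r2]
    _ = b*c*(b*c*b)*c := by group
    _ = b*c*(c*b*c)*c := by rw [r2]
    _ = b*c*c*(b*c*c) := by group

lemma HK : dd*a*(dd*a) = dd4*dd4*(c*c) := by
  rw [T2]
  calc dd*a*(dd*a) = dd * (a * dd * a) := by group
    _ = dd * (a * (b*c*c*(b*c*c)) * a) := by rw [W1]
    _ = dd * (a*b*c*c*b*(c*(c*a))) := by group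
    _ = dd * (a*b*c*c*b*(c*(a*c))) := by rw [← r3]
    _ = dd * (a*b*c*c*b*((c*a)*c)) := by group
    _ = dd * (a*b*c*c*b*((a*c)*c)) := by rw [← r3]
    _ = dd * (a*b*c*(c*b*a)) * (c*c) := by group

lemma Sa : dd4*dd4*a = a*(dd4*dd4) := by
  calc dd4*dd4*a = dd4*(dd4*a) := by group
    _ = dd4*(c*dd4) := by rw [L1]
    _ = (dd4*c)*dd4 := by group
    _ = (a*dd4)*dd4 := by rw [L3]
    _ = a*(dd4*dd4) := by group

lemma Sc : dd4*dd4*c = c*(dd4*dd4) := by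
  calc dd4*dd4*c = dd4*(dd4*c) := by group
    _ = dd4*(a*dd4) := by rw [L3]
    _ = (dd4*a)*dd4 := by group
    _ = (c*dd4)*dd4 := by rw [L1]
    _ = c*(dd4*dd4) := by group

lemma E1 : c * dd = dd * c := by
  rw [dd_ex]
  nth_rewrite 1 [← r2]
  nth_rewrite 3 [← r2]
  group

lemma E1' : a * dp = dp * a := by
  rw [dp]
  nth_rewrite 1 [r1]
  nth_rewrite 3 [r1]
  group

lemma DAlt : dd4 = a*b*c*(a*b*a) := by
  rw [dd4]
  calc a*b*a*c*b*a = a*b*((a*c)*(b*a)) := by group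
    _ = a*b*((c*a)*(b*a)) := by rw [r3]
    _ = a*b*c*(a*b*a) := by group

lemma cm_ac : Commute a c := r3
lemma cm_cdd : Commute c dd := E1
lemma cm_adp : Commute a dp := E1'
lemma adpinv : dp⁻¹ * a = a * dp⁻¹ := (cm_adp.inv_right.symm).eq
lemma cddinv : c * dd⁻¹ = dd⁻¹ * c := cm_cdd.inv_right.eq
lemma cinv_dd : c⁻¹ * dd = dd * c⁻¹ := cm_cdd.inv_left.eq
lemma cinva : c⁻¹ * a = a * c⁻¹ := (cm_ac.inv_right.symm).eq

lemma M1inv : dd4 * dp⁻¹ = dd⁻¹ * dd4 := by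
  calc dd4*dp⁻¹ = dd⁻¹*(dd*dd4)*dp⁻¹ := by group
    _ = dd⁻¹*(dd4*dp)*dp⁻¹ := by rw [M1]
    _ = dd⁻¹*dd4 := by group

lemma L3inv : dd4 * c⁻¹ = a⁻¹ * dd4 := by
  calc dd4*c⁻¹ = a⁻¹*(a*dd4)*c⁻¹ := by group
    _ = a⁻¹*(dd4*c)*c⁻¹ := by rw [← L3]
    _ = a⁻¹*dd4 := by group

lemma H1 : b2 * b1 * b2⁻¹ = dd⁻¹ * b1⁻¹ * dd := by
  calc b2 * b1 * b2⁻¹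
      = (a*b*c*(a*b*a)) * dp⁻¹ * (a * (c⁻¹ * (dp * (a*b*c*(a*b*a))⁻¹))) := by
        simp only [b1, b2, dp]; group
    _ = dd4 * dp⁻¹ * (a * (c⁻¹ * (dp * dd4⁻¹))) := by rw [← DAlt]
    _ = dd4 * (dp⁻¹ * a) * (c⁻¹ * (dp * dd4⁻¹)) := by group
    _ = dd4 * (a * dp⁻¹) * (c⁻¹ * (dp * dd4⁻¹)) := by rw [adpinv]
    _ = (dd4 * a) * (dp⁻¹ * (c⁻¹ * (dp * dd4⁻¹))) := by group
    _ = (c * dd4) * (dp⁻¹ * (c⁻¹ * (dp * dd4⁻¹))) := by rw [L1]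
    _ = c * ((dd4 * dp⁻¹) * (c⁻¹ * (dp * dd4⁻¹))) := by group
    _ = c * ((dd⁻¹ * dd4) * (c⁻¹ * (dp * dd4⁻¹))) := by rw [M1inv]
    _ = c * (dd⁻¹ * ((dd4 * c⁻¹) * (dp * dd4⁻¹))) := by group
    _ = c * (dd⁻¹ * ((a⁻¹ * dd4) * (dp * dd4⁻¹))) := by rw [L3inv]
    _ = c * (dd⁻¹ * (a⁻¹ * ((dd4 * dp) * dd4⁻¹))) := by group
    _ = c * (dd⁻¹ * (a⁻¹ * ((dd * dd4) * dd4⁻¹))) := by rw [M1]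
    _ = (c * dd⁻¹) * (a⁻¹ * dd) := by group
    _ = (dd⁻¹ * c) * (a⁻¹ * dd) := by rw [cddinv]
    _ = dd⁻¹ * b1⁻¹ * dd := by simp only [b1]; group

lemma HL : dd * b1 * (dd * b1) = dd4 * dd4 := by
  simp only [b1]
  calc dd*(a*c⁻¹)*(dd*(a*c⁻¹)) = dd*a*((c⁻¹*dd)*(a*c⁻¹)) := by group
    _ = dd*a*((dd*c⁻¹)*(a*c⁻¹)) := by rw [cinv_dd]
    _ = dd*a*(dd*((c⁻¹*a)*c⁻¹)) := by group
    _ = dd*a*(dd*((a*c⁻¹)*c⁻¹)) := by rw [cinva]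
    _ = dd*a*(dd*a)*(c⁻¹*c⁻¹) := by group
    _ = dd4*dd4*(c*c)*(c⁻¹*c⁻¹) := by rw [HK]
    _ = dd4*dd4 := by group

lemma HR : b1 * (dd * (b1 * dd)) = dd4 * dd4 := by
  simp only [b1]
  calc (a*c⁻¹)*(dd*((a*c⁻¹)*dd)) = a*((c⁻¹*dd)*(a*((c⁻¹*dd)))) := by group
    _ = a*((dd*c⁻¹)*(a*((dd*c⁻¹)))) := by rw [cinv_dd]
    _ = a*dd*((c⁻¹*a)*(dd*c⁻¹)) := by group
    _ = a*dd*((a*c⁻¹)*(dd*c⁻¹)) := by rw [cinva]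
    _ = a*dd*a*((c⁻¹*dd)*c⁻¹) := by group
    _ = a*dd*a*((dd*c⁻¹)*c⁻¹) := by rw [cinv_dd]
    _ = a*(dd*a*(dd*a))*(a⁻¹*(c⁻¹*c⁻¹)) := by group
    _ = a*(dd4*dd4*(c*c))*(a⁻¹*(c⁻¹*c⁻¹)) := by rw [HK]
    _ = (a*(dd4*dd4))*((c*c)*(a⁻¹*(c⁻¹*c⁻¹))) := by group
    _ = (dd4*dd4*a)*((c*c)*(a⁻¹*(c⁻¹*c⁻¹))) := by rw [← Sa]
    _ = dd4*dd4*((a*c)*(c*(a⁻¹*(c⁻¹*c⁻¹)))) := by group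
    _ = dd4*dd4*((c*a)*(c*(a⁻¹*(c⁻¹*c⁻¹)))) := by rw [r3]
    _ = dd4*dd4*(c*((a*c)*(a⁻¹*(c⁻¹*c⁻¹)))) := by group
    _ = dd4*dd4*(c*((c*a)*(a⁻¹*(c⁻¹*c⁻¹)))) := by rw [r3]
    _ = dd4*dd4 := by group

lemma H2 : dd * b1 * (dd * b1) = b1 * (dd * (b1 * dd)) := HL.trans HR.symm

lemma conjtrick {G : Type} [Group G] (x z : G) (h : z*x*(z*x) = x*(z*(x*z))) :
    z*x*z⁻¹ = x⁻¹*((z⁻¹*x⁻¹*z)⁻¹*x) := by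
  calc z*x*z⁻¹ = x⁻¹*z⁻¹*(z*x*(z*x))*z⁻¹ := by group
    _ = x⁻¹*z⁻¹*(x*(z*(x*z)))*z⁻¹ := by rw [h]
    _ = x⁻¹*((z⁻¹*x⁻¹*z)⁻¹*x) := by group

lemma conjtrick2 {G : Type} [Group G] (x z : G) (h : z*x*(z*x) = x*(z*(x*z))) :
    z⁻¹*(z⁻¹*x⁻¹*z)*z = (z⁻¹*x⁻¹*z)⁻¹*(x⁻¹*(z⁻¹*x⁻¹*z)) := by
  calc z⁻¹*(z⁻¹*x⁻¹*z)*z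
      = z⁻¹*(z⁻¹*x⁻¹)*(z*x*(z*x))*(x⁻¹*z⁻¹*(x⁻¹*z)) := by group
    _ = z⁻¹*(z⁻¹*x⁻¹)*(x*(z*(x*z)))*(x⁻¹*z⁻¹*(x⁻¹*z)) := by rw [h]
    _ = (z⁻¹*x⁻¹*z)⁻¹*(x⁻¹*(z⁻¹*x⁻¹*z)) := by group

lemma g1 : dd * b1 * dd⁻¹ = b1⁻¹*((b2*b1*b2⁻¹)⁻¹*b1) := by
  rw [H1]; exact conjtrick b1 dd H2

lemma g2 : dd * (b2*b1*b2⁻¹) * dd⁻¹ = b1⁻¹ := by rw [H1]; group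

lemma g3 : dd⁻¹ * b1 * dd = (b2*b1*b2⁻¹)⁻¹ := by rw [H1]; group

lemma g4 : dd⁻¹ * (b2*b1*b2⁻¹) * dd = (b2*b1*b2⁻¹)⁻¹ * (b1⁻¹*(b2*b1*b2⁻¹)) := by
  rw [H1]; exact conjtrick2 b1 dd H2

lemma g5 : c * b1 * c⁻¹ = b1 := by
  simp only [b1]
  calc c*(a*c⁻¹)*c⁻¹ = (c*a)*(c⁻¹*c⁻¹) := by group
    _ = (a*c)*(c⁻¹*c⁻¹) := by rw [← r3]
    _ = a*c⁻¹ := by group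

lemma cb1 : c * b1 = b1 * c := by
  have h := g5; rw [mul_inv_eq_iff_eq_mul] at h; exact h

lemma cb1inv : c * b1⁻¹ = b1⁻¹ * c := by
  have h : Commute c b1 := cb1
  exact h.inv_right.eq

lemma g6 : c * (b2*b1*b2⁻¹) * c⁻¹ = b2*b1*b2⁻¹ := by
  rw [H1]
  calc c*(dd⁻¹*b1⁻¹*dd)*c⁻¹ = (c*dd⁻¹)*(b1⁻¹*(dd*c⁻¹)) := by group
    _ = (dd⁻¹*c)*(b1⁻¹*(dd*c⁻¹)) := by rw [cddinv]
    _ = dd⁻¹*((c*b1⁻¹)*(dd*c⁻¹)) := by group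
    _ = dd⁻¹*((b1⁻¹*c)*(dd*c⁻¹)) := by rw [cb1inv]
    _ = dd⁻¹*(b1⁻¹*((c*dd)*c⁻¹)) := by group
    _ = dd⁻¹*(b1⁻¹*((dd*c)*c⁻¹)) := by rw [E1]
    _ = dd⁻¹*b1⁻¹*dd := by group

lemma hb1K : b1 ∈ K := Subgroup.subset_closure (Set.mem_insert _ _)
lemma hy0K : b2 * b1 * b2⁻¹ ∈ K :=
  Subgroup.subset_closure (Set.mem_insert_of_mem _ rfl)

lemma conj_mem_K (z : B4) (h1 : z*b1*z⁻¹ ∈ K) (h2 : z*(b2*b1*b2⁻¹)*z⁻¹ ∈ K) :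
    ∀ g ∈ K, z*g*z⁻¹ ∈ K := by
  intro g hg
  have hle : K.map (MulAut.conj z).toMonoidHom ≤ K := by
    rw [show K = Subgroup.closure {b1, b2 * b1 * b2⁻¹} from rfl,
      MonoidHom.map_closure]
    refine (Subgroup.closure_le _).mpr ?_
    rintro w ⟨s, hs, rfl⟩
    rcases hs with rfl | rfl
    · simpa [MulAut.conj_apply, mul_assoc, K] using h1
    · simpa [MulAut.conj_apply, mul_assoc, K] using h2
  exact hle ⟨g, hg, by simp [MulAut.conj_apply, mul_assoc]⟩

lemma c_mem_norm : c ∈ Subgroup.normalizer (K : Set B4) := by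
  rw [Subgroup.mem_normalizer_iff]
  intro g
  constructor
  · intro hg
    refine conj_mem_K c ?_ ?_ g hg
    · rw [g5]; exact hb1K
    · rw [g6]; exact hy0K
  · intro hg
    have h1 : c⁻¹*b1*c⁻¹⁻¹ ∈ K := by
      have : c⁻¹*b1*c⁻¹⁻¹ = b1 := by
        calc c⁻¹*b1*c⁻¹⁻¹ = c⁻¹*(b1*c) := by group
          _ = c⁻¹*(c*b1) := by rw [← cb1]
          _ = b1 := by group
      rw [this]; exact hb1K
    have h2 : c⁻¹*(b2*b1*b2⁻¹)*c⁻¹⁻¹ ∈ K := by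
      have hcy0 : c * (b2*b1*b2⁻¹) = (b2*b1*b2⁻¹) * c := by
        have h := g6; rw [mul_inv_eq_iff_eq_mul] at h; exact h
      have : c⁻¹*(b2*b1*b2⁻¹)*c⁻¹⁻¹ = b2*b1*b2⁻¹ := by
        calc c⁻¹*(b2*b1*b2⁻¹)*c⁻¹⁻¹ = c⁻¹*((b2*b1*b2⁻¹)*c) := by group
          _ = c⁻¹*(c*(b2*b1*b2⁻¹)) := by rw [← hcy0]
          _ = b2*b1*b2⁻¹ := by group
      rw [this]; exact hy0K
    have := conj_mem_K c⁻¹ h1 h2 _ hg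
    have heq : c⁻¹*(c*g*c⁻¹)*c⁻¹⁻¹ = g := by group
    rwa [heq] at this

lemma dd_mem_norm : dd ∈ Subgroup.normalizer (K : Set B4) := by
  rw [Subgroup.mem_normalizer_iff]
  intro g
  constructor
  · intro hg
    refine conj_mem_K dd ?_ ?_ g hg
    · rw [g1]
      exact mul_mem (inv_mem hb1K) (mul_mem (inv_mem hy0K) hb1K)
    · rw [g2]; exact inv_mem hb1K
  · intro hg
    have h1 : dd⁻¹*b1*dd⁻¹⁻¹ ∈ K := by
      rw [inv_inv, g3]; exact inv_mem hy0K
    have h2 : dd⁻¹*(b2*b1*b2⁻¹)*dd⁻¹⁻¹ ∈ K := by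
      rw [inv_inv, g4]
      exact mul_mem (inv_mem hy0K) (mul_mem (inv_mem hb1K) hy0K)
    have := conj_mem_K dd⁻¹ h1 h2 _ hg
    have heq : dd⁻¹*(dd*g*dd⁻¹)*dd⁻¹⁻¹ = g := by group
    rwa [heq] at this

lemma znorm (m k : ℤ) : c^m * dd^k ∈ Subgroup.normalizer (K : Set B4) :=
  mul_mem (zpow_mem c_mem_norm m) (zpow_mem dd_mem_norm k)

lemma zcomb (m₁ k₁ m₂ k₂ : ℤ) :
    (c^m₁*dd^k₁) * (c^m₂*dd^k₂) = c^(m₁+m₂)*dd^(k₁+k₂) := by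
  have hcomm : dd^k₁ * c^m₂ = c^m₂ * dd^k₁ :=
    (((cm_cdd.symm).zpow_zpow k₁ m₂)).eq
  calc c^m₁*dd^k₁*(c^m₂*dd^k₂) = c^m₁*(dd^k₁*c^m₂)*dd^k₂ := by group
    _ = c^m₁*(c^m₂*dd^k₁)*dd^k₂ := by rw [hcomm]
    _ = (c^m₁*c^m₂)*(dd^k₁*dd^k₂) := by group
    _ = c^(m₁+m₂)*dd^(k₁+k₂) := by rw [← zpow_add, ← zpow_add]

lemma zinv (m k : ℤ) : c^(-m)*dd^(-k) = (c^m*dd^k)⁻¹ := by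
  have hcomm : dd^(-k) * c^(-m) = c^(-m) * dd^(-k) :=
    (((cm_cdd.symm).zpow_zpow (-k) (-m))).eq
  rw [mul_inv_rev, ← zpow_neg, ← zpow_neg, hcomm]

lemma decomp : ∀ h ∈ centralizerσ3, ∃ u ∈ K, ∃ m k : ℤ, h = u * c^m * dd^k := by
  intro h hH
  have hH' : h ∈ Subgroup.closure {σ 0, σ 2, (σ 2 * σ 1 * σ 2) ^ 2} := hH
  clear hH
  induction hH' using Subgroup.closure_induction with
  | mem x hx =>
    rcases hx with rfl | rfl | rfl
    · exact ⟨b1, hb1K, 1, 0, by simp only [b1]; group⟩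
    · exact ⟨1, one_mem _, 1, 0, by group⟩
    · exact ⟨1, one_mem _, 0, 1, by rw [show ((σ 2 * σ 1 * σ 2:B4)) ^ 2 = dd from rfl]; group⟩
  | one => exact ⟨1, one_mem _, 0, 0, by group⟩
  | mul x y hx hy ihx ihy =>
    obtain ⟨u₁, hu₁, m₁, k₁, rfl⟩ := ihx
    obtain ⟨u₂, hu₂, m₂, k₂, rfl⟩ := ihy
    have hconj : (c^m₁*dd^k₁) * u₂ * (c^m₁*dd^k₁)⁻¹ ∈ K :=
      (Subgroup.mem_normalizer_iff.mp (znorm m₁ k₁) u₂).mp hu₂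
    refine ⟨u₁ * ((c^m₁*dd^k₁) * u₂ * (c^m₁*dd^k₁)⁻¹), mul_mem hu₁ hconj,
      m₁+m₂, k₁+k₂, ?_⟩
    have key : u₁ * c ^ m₁ * dd ^ k₁ * (u₂ * c ^ m₂ * dd ^ k₂) =
        u₁ * ((c^m₁*dd^k₁) * u₂ * (c^m₁*dd^k₁)⁻¹) * ((c^m₁*dd^k₁) * (c^m₂*dd^k₂)) := by
      group
    rw [key, zcomb]; group
  | inv x hx ihx =>
    obtain ⟨u, hu, m, k, rfl⟩ := ihx
    have hconj : (c^m*dd^k)⁻¹ * u⁻¹ * ((c^m*dd^k)⁻¹)⁻¹ ∈ K :=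
      (Subgroup.mem_normalizer_iff.mp (inv_mem (znorm m k)) u⁻¹).mp (inv_mem hu)
    refine ⟨(c^m*dd^k)⁻¹ * u⁻¹ * ((c^m*dd^k)⁻¹)⁻¹, hconj, -m, -k, ?_⟩
    calc (u * c^m*dd^k)⁻¹
        = (c^m*dd^k)⁻¹ * u⁻¹ * ((c^m*dd^k)⁻¹)⁻¹ * (c^m*dd^k)⁻¹ := by group
      _ = (c^m*dd^k)⁻¹ * u⁻¹ * ((c^m*dd^k)⁻¹)⁻¹ * (c^(-m)*dd^(-k)) := by rw [zinv]
      _ = (c^m*dd^k)⁻¹ * u⁻¹ * ((c^m*dd^k)⁻¹)⁻¹ * c^(-m)*dd^(-k) := by group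

end B4words

/-- let `H = ⟨σ1, σ3, (σ3 σ2 σ3)²⟩` (the centralizer of `σ3` in `B₄`)
and let `ρ : B₄ → B₃` be the Gorin–Lin quotient with `ρ(σ1) = ρ(σ3) = τ2`,
`ρ(σ2) = τ1`.  Then `H ∩ ker ρ = ⟨b1, b2 b1 b2⁻¹⟩`, and every element of `H` is
uniquely of the form `u · σ3^m · ((σ3 σ2 σ3)²)^k` with `u ∈ ⟨b1, b2 b1 b2⁻¹⟩` and
`m, k ∈ ℤ`; i.e. `H = ⟨b1, b2 b1 b2⁻¹⟩ ⋊ ⟨σ3, (σ3 σ2 σ3)²⟩`. -/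
theorem statement10
    (ρ : B4 →* B3) (hρ1 : ρ (σ 0) = τ 1) (hρ2 : ρ (σ 1) = τ 0) (hρ3 : ρ (σ 2) = τ 1) :
    K = centralizerσ3 ⊓ ρ.ker ∧
      ∀ h ∈ centralizerσ3,
        ∃! x : K × ℤ × ℤ,
          h = (x.1 : B4) * σ 2 ^ x.2.1 * ((σ 2 * σ 1 * σ 2) ^ 2) ^ x.2.2 := by
  have hρdd : ρ dd = (τ 1 * τ 0 * τ 1)^2 := by
    rw [show dd = (σ 2 * σ 1 * σ 2)^2 from rfl, map_pow, map_mul, map_mul, hρ3, hρ2]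
  have hKker : K ≤ ρ.ker := by
    rw [show K = Subgroup.closure {b1, b2 * b1 * b2⁻¹} from rfl]
    refine (Subgroup.closure_le _).mpr ?_
    rintro x (rfl | rfl)
    · simp only [SetLike.mem_coe, MonoidHom.mem_ker, b1, map_mul, map_inv, hρ1, hρ3]
      group
    · simp only [SetLike.mem_coe, MonoidHom.mem_ker, b1, b2, map_mul, map_inv, hρ1, hρ2, hρ3]
      group
  have haH : (σ 0) ∈ centralizerσ3 := Subgroup.subset_closure (Set.mem_insert _ _)
  have hcH : (σ 2) ∈ centralizerσ3 :=
    Subgroup.subset_closure (Set.mem_insert_of_mem _ (Set.mem_insert _ _))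
  have hddH : dd ∈ centralizerσ3 :=
    Subgroup.subset_closure (Set.mem_insert_of_mem _ (Set.mem_insert_of_mem _ rfl))
  have hb1H : b1 ∈ centralizerσ3 := by
    rw [show b1 = σ 0 * (σ 2)⁻¹ from rfl]
    exact mul_mem haH (inv_mem hcH)
  have hKH : K ≤ centralizerσ3 := by
    rw [show K = Subgroup.closure {b1, b2 * b1 * b2⁻¹} from rfl]
    refine (Subgroup.closure_le _).mpr ?_
    rintro x (rfl | rfl)
    · exact hb1H
    · show b2 * b1 * b2⁻¹ ∈ centralizerσ3
      rw [H1]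
      exact mul_mem (mul_mem (inv_mem hddH) (inv_mem hb1H)) hddH
  have hρu : ∀ u ∈ K, ρ u = 1 := fun u hu => hKker hu
  have main : ∀ u ∈ K, ∀ (m k : ℤ), ∀ u' ∈ K, ∀ (m' k' : ℤ),
      u * σ 2 ^ m * dd ^ k = u' * σ 2 ^ m' * dd ^ k' → u = u' ∧ m = m' ∧ k = k' := by
    intro u hu m k u' hu' m' k' heq
    have h1 := congrArg ρ heq
    simp only [map_mul, map_zpow, hρ3, hρdd, hρu u hu, hρu u' hu', one_mul] at h1
    have h2 : (τ 1)^(m-m') * ((τ 1 * τ 0 * τ 1)^2)^(k-k') = 1 := by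
      have e1 : (τ 1)^(m-m') = (τ 1)^(-m') * (τ 1)^m := by
        rw [← zpow_add]; ring_nf
      have e2 : ((τ 1 * τ 0 * τ 1)^2)^(k-k') =
          ((τ 1 * τ 0 * τ 1)^2)^k * ((τ 1 * τ 0 * τ 1)^2)^(-k') := by
        rw [← zpow_add]; ring_nf
      rw [e1, e2]
      calc (τ 1)^(-m') * (τ 1)^m * (((τ 1 * τ 0 * τ 1)^2)^k * ((τ 1 * τ 0 * τ 1)^2)^(-k'))
          = (τ 1)^(-m') * (((τ 1)^m * ((τ 1 * τ 0 * τ 1)^2)^k) * ((τ 1 * τ 0 * τ 1)^2)^(-k')) := by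
            group
        _ = (τ 1)^(-m') * (((τ 1)^m' * ((τ 1 * τ 0 * τ 1)^2)^k') * ((τ 1 * τ 0 * τ 1)^2)^(-k')) := by
            rw [h1]
        _ = ((τ 1)^(-m') * (τ 1)^m') * (((τ 1 * τ 0 * τ 1)^2)^k' * ((τ 1 * τ 0 * τ 1)^2)^(-k')) := by
            group
        _ = 1 := by rw [← zpow_add, ← zpow_add]; simp
    obtain ⟨hm, hk⟩ := B3key _ _ h2
    have hm' : m = m' := by omega
    have hk' : k = k' := by omega
    subst hm' hk'
    refine ⟨?_, rfl, rfl⟩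
    have := mul_right_cancel (mul_right_cancel heq)
    exact this
  constructor
  · refine le_antisymm (le_inf hKH hKker) ?_
    intro h hmem
    rw [Subgroup.mem_inf] at hmem
    obtain ⟨hH, hker⟩ := hmem
    obtain ⟨u, hu, m, k, rfl⟩ := decomp h hH
    have h0 : ρ (u * σ 2 ^ m * dd ^ k) = 1 := hker
    simp only [map_mul, map_zpow, hρ3, hρdd, hρu u hu, one_mul] at h0
    obtain ⟨hm, hk⟩ := B3key m k h0
    rw [hm, hk, zpow_zero, zpow_zero, mul_one, mul_one]
    exact hu
  · intro h hH
    obtain ⟨u, hu, m, k, hdec⟩ := decomp h hH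
    refine ⟨(⟨u, hu⟩, m, k), ?_, ?_⟩
    · exact hdec
    · rintro ⟨y1, m', k'⟩ hy
      have hyy : (y1 : B4) * σ 2 ^ m' * dd ^ k' = u * σ 2 ^ m * dd ^ k :=
        hy.symm.trans hdec
      obtain ⟨he, hm, hk⟩ := main (y1 : B4) y1.2 m' k' u hu m k hyy
      ext
      · exact congrArg _ (Subtype.ext he)
      · exact hm
      · exact hk
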